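/- Let N ≥ 1 be an integer, q ∈ ℝ^N with q_i > 0 for all i, and ρ > 0. Let λ ≥ 0 and set p* := p(λ), where p(λ)_i := q_i^{1/(1+λ)} / Σ_{j=1}^N q_j^{1/(1+λ)}. Suppose that either (a) λ = 0 and Σ_{i=1}^N p*_i·log(N·p*_i) ≤ ρ, or (b) Σ_{i=1}^N p*_i·log(N·p*_i) = ρ. Then p* ∈ P_{ρ,N} and p* maximizes the entropy-regularized objective over the constraint set: for every p ∈ P_{ρ,N}, Σ_{i=1}^N p_i·log(q_i) − Σ_{i=1}^N p_i·log(p_i) ≤ Σ_{i=1}^N p*_i·log(q_i) − Σ_{i=1}^N p*_i·log(p*_i), with the convention 0·log 0 = 0. -/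
import Mathlib


/-- The constraint set `P_{ρ,N}`: probability vectors on `{1,…,N}` whose KL divergence
from the uniform vector is at most `ρ` (convention `0 · log 0 = 0` is automatic since
`Real.log 0 = 0`). -/
def Pset (N : ℕ) (ρ : ℝ) : Set (Fin N → ℝ) :=
  {p | (∀ i, 0 ≤ p i) ∧ ∑ i, p i = 1 ∧ ∑ i, p i * Real.log (N * p i) ≤ ρ}

/-- The exponentially reweighted vector `p(λ) i = (q i)^(1/(1+λ)) / ∑ j, (q j)^(1/(1+λ))`. -/
noncomputable def tilt (N : ℕ) (q : Fin N → ℝ) (lam : ℝ) : Fin N → ℝ :=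
  fun i => q i ^ ((1 : ℝ) / (1 + lam)) / ∑ j, q j ^ ((1 : ℝ) / (1 + lam))

/-- Gibbs' inequality: cross entropy dominates entropy. -/
lemma gibbs_aux {N : ℕ} (p r : Fin N → ℝ) (hp : ∀ i, 0 ≤ p i) (hr : ∀ i, 0 < r i)
    (hps : ∑ i, p i = 1) (hrs : ∑ i, r i = 1) :
    ∑ i, p i * Real.log (r i) - ∑ i, p i * Real.log (p i) ≤ 0 := by
  have h1 : ∀ i : Fin N, p i * Real.log (r i) - p i * Real.log (p i) ≤ r i - p i := by
    intro i
    rcases eq_or_lt_of_le (hp i) with h | h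
    · simp [← h, (hr i).le]
    · have hlog : Real.log (r i) - Real.log (p i) ≤ r i / p i - 1 := by
        rw [← Real.log_div (hr i).ne' h.ne']
        exact Real.log_le_sub_one_of_pos (div_pos (hr i) h)
      have h2 := mul_le_mul_of_nonneg_left hlog (hp i)
      calc p i * Real.log (r i) - p i * Real.log (p i)
          = p i * (Real.log (r i) - Real.log (p i)) := by ring
        _ ≤ p i * (r i / p i - 1) := h2
        _ = r i - p i := by field_simp
  calc ∑ i, p i * Real.log (r i) - ∑ i, p i * Real.log (p i)
      = ∑ i, (p i * Real.log (r i) - p i * Real.log (p i)) := by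
        rw [Finset.sum_sub_distrib]
    _ ≤ ∑ i, (r i - p i) := Finset.sum_le_sum fun i _ => h1 i
    _ = 0 := by rw [Finset.sum_sub_distrib, hps, hrs]; ring

/-- **FedMABA's closed-form update is the exact mirror-ascent step.** For `q i > 0`, `ρ > 0`,
`λ ≥ 0` and `p* = p(λ)`, if either (a) `λ = 0` and `KL(p*‖u) ≤ ρ`, or (b) `KL(p*‖u) = ρ`,
then `p* ∈ P_{ρ,N}` and `p*` maximizes the entropy-regularized objective
`p ↦ ∑ p i log (q i) - ∑ p i log (p i)` over `P_{ρ,N}`. -/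
theorem tilt_maximizes_over_Pset (N : ℕ) (hN : 1 ≤ N) (q : Fin N → ℝ) (hq : ∀ i, 0 < q i)
    (ρ : ℝ) (hρ : 0 < ρ) (lam : ℝ) (hlam : 0 ≤ lam)
    (pstar : Fin N → ℝ) (hpstar : pstar = tilt N q lam)
    (hcase : (lam = 0 ∧ ∑ i, pstar i * Real.log (N * pstar i) ≤ ρ) ∨
      ∑ i, pstar i * Real.log (N * pstar i) = ρ) :
    pstar ∈ Pset N ρ ∧
      ∀ p ∈ Pset N ρ,
        ∑ i, p i * Real.log (q i) - ∑ i, p i * Real.log (p i) ≤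
          ∑ i, pstar i * Real.log (q i) - ∑ i, pstar i * Real.log (pstar i) := by
  have hNpos : (0:ℝ) < N := by exact_mod_cast Nat.lt_of_lt_of_le Nat.zero_lt_one hN
  haveI : NeZero N := ⟨Nat.one_le_iff_ne_zero.mp hN⟩
  set β : ℝ := (1:ℝ) / (1 + lam) with hβdef
  have hlam1 : (0:ℝ) < 1 + lam := by linarith
  have hb1 : (1 + lam) * β = 1 := by rw [hβdef]; field_simp
  set S : ℝ := ∑ j, q j ^ β with hSdef
  have hS : 0 < S :=
    Finset.sum_pos (fun j _ => Real.rpow_pos_of_pos (hq j) β) Finset.univ_nonempty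
  have hpst_pos : ∀ i, 0 < pstar i := by
    intro i; rw [hpstar]
    exact div_pos (Real.rpow_pos_of_pos (hq i) β) hS
  have hpst_sum : ∑ i, pstar i = 1 := by
    rw [hpstar]; unfold tilt
    rw [← Finset.sum_div, div_self hS.ne']
  -- log of pstar
  have hlog_pstar : ∀ i, Real.log (pstar i) = β * Real.log (q i) - Real.log S := by
    intro i
    rw [hpstar]; unfold tilt
    rw [Real.log_div (Real.rpow_pos_of_pos (hq i) β).ne' hS.ne',
      Real.log_rpow (hq i)]
  -- identity: cross entropy with q in terms of cross entropy with pstar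
  have hGid : ∀ p : Fin N → ℝ, (∑ i, p i = 1) →
      ∑ i, p i * Real.log (q i) =
        (1 + lam) * (∑ i, p i * Real.log (pstar i)) + (1 + lam) * Real.log S := by
    intro p hps
    have hterm : ∀ i : Fin N, p i * Real.log (q i) =
        (1 + lam) * (p i * Real.log (pstar i)) + (1 + lam) * Real.log S * p i := by
      intro i
      have h1 := hlog_pstar i
      have h2 : Real.log (q i) = (1 + lam) * β * Real.log (q i) := by
        rw [hb1, one_mul]
      calc p i * Real.log (q i) = p i * ((1 + lam) * β * Real.log (q i)) := by rw [← h2]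
        _ = (1 + lam) * (p i * (β * Real.log (q i) - Real.log S))
            + (1 + lam) * Real.log S * p i := by ring
        _ = (1 + lam) * (p i * Real.log (pstar i)) + (1 + lam) * Real.log S * p i := by
            rw [← h1]
    rw [Finset.sum_congr rfl (fun i _ => hterm i), Finset.sum_add_distrib,
      ← Finset.mul_sum, ← Finset.mul_sum, hps, mul_one]
  -- identity: KL to uniform = log N + negative entropy
  have hKL : ∀ p : Fin N → ℝ, (∀ i, 0 ≤ p i) → (∑ i, p i = 1) →
      ∑ i, p i * Real.log (N * p i) = Real.log N + ∑ i, p i * Real.log (p i) := by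
    intro p hp hps
    have hterm : ∀ i : Fin N, p i * Real.log (N * p i)
        = p i * Real.log N + p i * Real.log (p i) := by
      intro i
      rcases eq_or_lt_of_le (hp i) with h | h
      · simp [← h]
      · rw [Real.log_mul hNpos.ne' h.ne']; ring
    rw [Finset.sum_congr rfl (fun i _ => hterm i), Finset.sum_add_distrib,
      ← Finset.sum_mul, hps, one_mul]
  -- pstar is in the constraint set
  have hKLstar : ∑ i, pstar i * Real.log (N * pstar i) ≤ ρ := by
    rcases hcase with ⟨_, h⟩ | h
    · exact h
    · exact le_of_eq h
  have hmem : pstar ∈ Pset N ρ := ⟨fun i => (hpst_pos i).le, hpst_sum, hKLstar⟩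
  refine ⟨hmem, ?_⟩
  intro p hp
  obtain ⟨hp0, hp1, hp2⟩ := hp
  -- abbreviations
  have hTp := gibbs_aux p pstar hp0 hpst_pos hp1 hpst_sum
  have hGp := hGid p hp1
  have hGs := hGid pstar hpst_sum
  have hKLp := hKL p hp0 hp1
  have hKLs := hKL pstar (fun i => (hpst_pos i).le) hpst_sum
  -- lam * (ρ - KL(pstar)) = 0
  have hzero : lam * (Real.log N + ∑ i, pstar i * Real.log (pstar i)) = lam * ρ := by
    rcases hcase with ⟨h0, _⟩ | h
    · rw [h0]; ring
    · rw [hKLs] at h; rw [h]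
  -- lam * (ρ - KL(p)) ≥ 0
  have hslack : 0 ≤ lam * (ρ - ∑ i, p i * Real.log (N * p i)) :=
    mul_nonneg hlam (by linarith)
  rw [hKLp] at hslack
  have hgibbs : (1 + lam) * (∑ i, p i * Real.log (pstar i) - ∑ i, p i * Real.log (p i)) ≤ 0 :=
    mul_nonpos_of_nonneg_of_nonpos hlam1.le hTp
  nlinarith [hGp, hGs, hzero, hslack, hgibbs]
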